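/- Let V be a finite-dimensional real inner product space with an orthogonal direct sum decomposition V = V₁ ⊕ V₂, and let 𝔤 = {A ∈ 𝔰𝔬(V) : A(V₁) ⊆ V₁ and A(V₂) ⊆ V₂}. Define W = {T̃ ∈ A²(V;V) : ⟨T̃(u,v),w⟩ = ⟨T̃(u,w),v⟩ for all u ∈ V whenever v and w both lie in V₁ or both lie in V₂}. Then A²(V;V) is the internal direct sum of δ(Hom(V,𝔤)) and W: every T ∈ A²(V;V) can be written uniquely as T = δτ + T̃ with τ ∈ Hom(V,𝔤) and T̃ ∈ W. -/

import Mathlib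

open scoped RealInnerProductSpace
set_option linter.unusedSectionVars false
set_option maxHeartbeats 1000000

section Aux

variable {V : Type*} [NormedAddCommGroup V] [InnerProductSpace ℝ V] [FiniteDimensional ℝ V]
  (V₁ V₂ : Submodule ℝ V)
  (horth : ∀ x ∈ V₁, ∀ y ∈ V₂, ⟪x, y⟫ = 0)
  (hcompl : IsCompl V₁ V₂)

/-- projection onto V₁ along V₂, as an endomorphism -/
noncomputable def projA : V →ₗ[ℝ] V :=
  V₁.subtype ∘ₗ V₁.projectionOnto V₂ hcompl

lemma projA_mem (x : V) : projA V₁ V₂ hcompl x ∈ V₁ := (V₁.projectionOnto V₂ hcompl x).2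

lemma projA_add_projB (x : V) :
    projA V₁ V₂ hcompl x + projA V₂ V₁ hcompl.symm x = x := by
  simpa [projA] using Submodule.projection_add_projection_eq_self hcompl x

lemma projA_left (x : V) (hx : x ∈ V₁) : projA V₁ V₂ hcompl x = x := by
  exact congrArg Subtype.val (Submodule.projectionOnto_apply_left hcompl ⟨x, hx⟩)

lemma projA_right (x : V) (hx : x ∈ V₂) : projA V₁ V₂ hcompl x = 0 := by
  simp [projA, Submodule.projectionOnto_apply_of_mem_right hcompl hx]

include horth in
lemma projA_symm (x y : V) :
    ⟪projA V₁ V₂ hcompl x, y⟫ = ⟪x, projA V₁ V₂ hcompl y⟫ := by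
  set P := projA V₁ V₂ hcompl
  set Q := projA V₂ V₁ hcompl.symm
  have hx := projA_add_projB V₁ V₂ hcompl x
  have hy := projA_add_projB V₁ V₂ hcompl y
  have h1 : ⟪P x, Q y⟫ = 0 := horth _ (projA_mem _ _ _ x) _ (projA_mem _ _ _ y)
  have h2 : ⟪Q x, P y⟫ = 0 := by
    rw [real_inner_comm]; exact horth _ (projA_mem _ _ _ y) _ (projA_mem _ _ _ x)
  calc ⟪P x, y⟫ = ⟪P x, P y + Q y⟫ := by rw [hy]
    _ = ⟪P x, P y⟫ := by rw [inner_add_right, h1, add_zero]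
    _ = ⟪P x + Q x, P y⟫ := by rw [inner_add_left, h2, add_zero]
    _ = ⟪x, P y⟫ := by rw [hx]

variable (T : V →ₗ[ℝ] V →ₗ[ℝ] V)

/-- the connection-type map τ -/
noncomputable def tauFun : V →ₗ[ℝ] V →ₗ[ℝ] V :=
  letI P := projA V₁ V₂ hcompl
  letI Q := projA V₂ V₁ hcompl.symm
  LinearMap.mk₂ ℝ (fun u v => (2⁻¹ : ℝ) •
      (P (T u (P v)) - P (LinearMap.adjoint (T u) (P v))
        - P (LinearMap.adjoint (T (P v)) (P u))
        + (Q (T u (Q v)) - Q (LinearMap.adjoint (T u) (Q v))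
            - Q (LinearMap.adjoint (T (Q v)) (Q u)))))
    (by
      intro m n v
      simp only [map_add, LinearMap.add_apply, ← smul_add]
      congr 1
      abel)
    (by
      intro c m v
      simp only [map_smul, LinearMap.smul_apply, ← smul_sub, ← smul_add]
      rw [smul_comm])
    (by
      intro u m n
      simp only [map_add, LinearMap.add_apply, ← smul_add]
      congr 1
      abel)
    (by
      intro c u v
      simp only [map_smul, LinearMap.smul_apply, ← smul_sub, ← smul_add]
      rw [smul_comm])

include horth in
lemma tauFun_inner (u v w : V) :
    ⟪tauFun V₁ V₂ hcompl T u v, w⟫ =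
      2⁻¹ * ((⟪T u (projA V₁ V₂ hcompl v), projA V₁ V₂ hcompl w⟫
          - ⟪T u (projA V₁ V₂ hcompl w), projA V₁ V₂ hcompl v⟫
          - ⟪T (projA V₁ V₂ hcompl v) (projA V₁ V₂ hcompl w), projA V₁ V₂ hcompl u⟫)
        + (⟪T u (projA V₂ V₁ hcompl.symm v), projA V₂ V₁ hcompl.symm w⟫
          - ⟪T u (projA V₂ V₁ hcompl.symm w), projA V₂ V₁ hcompl.symm v⟫
          - ⟪T (projA V₂ V₁ hcompl.symm v) (projA V₂ V₁ hcompl.symm w),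
              projA V₂ V₁ hcompl.symm u⟫)) := by
  have horth' : ∀ x ∈ V₂, ∀ y ∈ V₁, ⟪x, y⟫ = 0 := fun x hx y hy => by
    rw [real_inner_comm]; exact horth y hy x hx
  have hPs := projA_symm V₁ V₂ horth hcompl
  have hQs := projA_symm V₂ V₁ horth' hcompl.symm
  simp only [tauFun, LinearMap.mk₂_apply, inner_smul_left, real_inner_smul_left,
    inner_add_left, inner_sub_left, RCLike.ofReal_real_eq_id, id_eq, map_inv₀,
    RCLike.ofReal_ofNat, conj_trivial]
  rw [hPs, hPs, hPs, hQs, hQs, hQs,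
    LinearMap.adjoint_inner_left, LinearMap.adjoint_inner_left,
    LinearMap.adjoint_inner_left, LinearMap.adjoint_inner_left]
  rw [real_inner_comm (projA V₁ V₂ hcompl v), real_inner_comm (projA V₁ V₂ hcompl u),
    real_inner_comm (projA V₂ V₁ hcompl.symm v), real_inner_comm (projA V₂ V₁ hcompl.symm u)]

include horth hcompl in
lemma sigma_zero (σ : V →ₗ[ℝ] V →ₗ[ℝ] V)
    (hskew : ∀ u v w : V, ⟪σ u v, w⟫ + ⟪v, σ u w⟫ = 0)
    (h1 : ∀ u : V, ∀ x ∈ V₁, σ u x ∈ V₁)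
    (h2 : ∀ u : V, ∀ x ∈ V₂, σ u x ∈ V₂)
    (hsym : ∀ u v w : V, ((v ∈ V₁ ∧ w ∈ V₁) ∨ (v ∈ V₂ ∧ w ∈ V₂)) →
      ⟪σ u v - σ v u, w⟫ = ⟪σ u w - σ w u, v⟫) :
    σ = 0 := by
  have horth' : ∀ x ∈ V₂, ∀ y ∈ V₁, ⟪x, y⟫ = 0 := fun x hx y hy => by
    rw [real_inner_comm]; exact horth y hy x hx
  have hskew' : ∀ u v w : V, ⟪σ u w, v⟫ = -⟪σ u v, w⟫ := by
    intro u v w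
    have h := hskew u v w
    have h2 := real_inner_comm v (σ u w)
    linarith
  -- cross terms vanish
  have cross : ∀ (W₁ W₂ : Submodule ℝ V),
      (∀ x ∈ W₁, ∀ y ∈ W₂, ⟪x, y⟫ = 0) →
      (∀ u : V, ∀ x ∈ W₁, σ u x ∈ W₁) →
      (∀ u : V, ∀ x ∈ W₂, σ u x ∈ W₂) →
      (∀ u v w : V, (v ∈ W₁ ∧ w ∈ W₁) → ⟪σ u v - σ v u, w⟫ = ⟪σ u w - σ w u, v⟫) →
      ∀ u ∈ W₂, ∀ v ∈ W₁, σ u v = 0 := by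
    intro W₁ W₂ ho m1 m2 hs u hu v hv
    have hz : ∀ w ∈ W₁, ⟪σ u v, w⟫ = 0 := by
      intro w hw
      have h := hs u v w ⟨hv, hw⟩
      rw [inner_sub_left, inner_sub_left] at h
      have a1 : ⟪σ v u, w⟫ = 0 := by
        rw [real_inner_comm]; exact ho w hw _ (m2 v u hu)
      have a2 : ⟪σ w u, v⟫ = 0 := by
        rw [real_inner_comm]; exact ho v hv _ (m2 w u hu)
      have a3 : ⟪σ u w, v⟫ = -⟪σ u v, w⟫ := hskew' u v w
      linarith
    exact inner_self_eq_zero.mp (hz _ (m1 u v hv))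
  -- same-block terms vanish
  have blockv : ∀ (W₁ : Submodule ℝ V),
      (∀ u : V, ∀ x ∈ W₁, σ u x ∈ W₁) →
      (∀ u v w : V, (v ∈ W₁ ∧ w ∈ W₁) → ⟪σ u v - σ v u, w⟫ = ⟪σ u w - σ w u, v⟫) →
      ∀ u ∈ W₁, ∀ v ∈ W₁, σ u v = 0 := by
    intro W₁ m1 hs u hu v hv
    have key : ∀ a ∈ W₁, ∀ b ∈ W₁, ∀ c ∈ W₁,
        2 * ⟪σ a b, c⟫ = ⟪σ b a, c⟫ - ⟪σ c a, b⟫ := by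
      intro a _ b hb c hc
      have h := hs a b c ⟨hb, hc⟩
      rw [inner_sub_left, inner_sub_left] at h
      have h2 := hskew' a b c
      linarith
    have hz : ∀ w ∈ W₁, ⟪σ u v, w⟫ = 0 := by
      intro w hw
      have e1 := key u hu v hv w hw
      have e2 := key v hv u hu w hw
      have e3 := key w hw u hu v hv
      have f1 := hskew' w u v
      have f2 := hskew' u v w
      have f3 := hskew' v u w
      linarith
    exact inner_self_eq_zero.mp (hz _ (m1 u v hv))
  have hs1 : ∀ u v w : V, (v ∈ V₁ ∧ w ∈ V₁) → ⟪σ u v - σ v u, w⟫ = ⟪σ u w - σ w u, v⟫ :=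
    fun u v w h => hsym u v w (Or.inl h)
  have hs2 : ∀ u v w : V, (v ∈ V₂ ∧ w ∈ V₂) → ⟪σ u v - σ v u, w⟫ = ⟪σ u w - σ w u, v⟫ :=
    fun u v w h => hsym u v w (Or.inr h)
  have c21 := cross V₁ V₂ horth h1 h2 hs1
  have c12 := cross V₂ V₁ horth' h2 h1 hs2
  have b1 := blockv V₁ h1 hs1
  have b2 := blockv V₂ h2 hs2
  apply LinearMap.ext; intro u; apply LinearMap.ext; intro v
  obtain ⟨a, ha, b, hb, rfl⟩ : ∃ a ∈ V₁, ∃ b ∈ V₂, u = a + b :=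
    ⟨_, projA_mem V₁ V₂ hcompl u, _, projA_mem V₂ V₁ hcompl.symm u,
      (projA_add_projB V₁ V₂ hcompl u).symm⟩
  obtain ⟨c, hc, d, hd, rfl⟩ : ∃ c ∈ V₁, ∃ d ∈ V₂, v = c + d :=
    ⟨_, projA_mem V₁ V₂ hcompl v, _, projA_mem V₂ V₁ hcompl.symm v,
      (projA_add_projB V₁ V₂ hcompl v).symm⟩
  simp only [map_add, LinearMap.add_apply, b1 a ha c hc, c21 b hb c hc,
    c12 a ha d hd, b2 b hb d hd, LinearMap.zero_apply]

end Aux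

theorem direct_sum_alternation_almost_product
    {V : Type*} [NormedAddCommGroup V] [InnerProductSpace ℝ V] [FiniteDimensional ℝ V]
    (V₁ V₂ : Submodule ℝ V)
    (horth : ∀ x ∈ V₁, ∀ y ∈ V₂, ⟪x, y⟫ = 0)
    (hcompl : IsCompl V₁ V₂)
    (T : V →ₗ[ℝ] V →ₗ[ℝ] V) (hT : ∀ v : V, T v v = 0) :
    ∃! p : (V →ₗ[ℝ] (V →ₗ[ℝ] V)) × (V →ₗ[ℝ] V →ₗ[ℝ] V),
      (∀ u v w : V, ⟪p.1 u v, w⟫ + ⟪v, p.1 u w⟫ = 0) ∧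
      (∀ u : V, ∀ x ∈ V₁, p.1 u x ∈ V₁) ∧
      (∀ u : V, ∀ x ∈ V₂, p.1 u x ∈ V₂) ∧
      (∀ v : V, p.2 v v = 0) ∧
      (∀ u v w : V, ((v ∈ V₁ ∧ w ∈ V₁) ∨ (v ∈ V₂ ∧ w ∈ V₂)) →
        ⟪p.2 u v, w⟫ = ⟪p.2 u w, v⟫) ∧
      (∀ u v : V, T u v = (p.1 u v - p.1 v u) + p.2 u v) := by
  classical
  -- alternation in two variables
  have halt : ∀ a b : V, T a b + T b a = 0 := by
    intro a b
    have h := hT (a + b)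
    simp only [map_add, LinearMap.add_apply, hT] at h
    rw [← h]; abel
  have hTneg : ∀ a b : V, T a b = -T b a := fun a b => eq_neg_of_add_eq_zero_left (halt a b)
  have hTi : ∀ a b c : V, ⟪T a b, c⟫ = -⟪T b a, c⟫ := by
    intro a b c; rw [hTneg a b, inner_neg_left]
  set P : V →ₗ[ℝ] V := projA V₁ V₂ hcompl with hP
  set Q : V →ₗ[ℝ] V := projA V₂ V₁ hcompl.symm with hQ
  set τ : V →ₗ[ℝ] V →ₗ[ℝ] V := tauFun V₁ V₂ hcompl T with hτ
  set Tt : V →ₗ[ℝ] V →ₗ[ℝ] V := T - τ + LinearMap.flip τ with hTt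
  have key : ∀ u v w : V, ⟪τ u v, w⟫ =
      2⁻¹ * ((⟪T u (P v), P w⟫ - ⟪T u (P w), P v⟫ - ⟪T (P v) (P w), P u⟫)
        + (⟪T u (Q v), Q w⟫ - ⟪T u (Q w), Q v⟫ - ⟪T (Q v) (Q w), Q u⟫)) :=
    fun u v w => tauFun_inner V₁ V₂ horth hcompl T u v w
  -- condition 1 : skewness
  have cond1 : ∀ u v w : V, ⟪τ u v, w⟫ + ⟪v, τ u w⟫ = 0 := by
    intro u v w
    have hc := real_inner_comm v (τ u w)
    have k1 := key u v w
    have k2 := key u w v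
    have f1 := hTi (P v) (P w) (P u)
    have f2 := hTi (Q v) (Q w) (Q u)
    linarith
  -- condition 2 : τ preserves V₁
  have cond2 : ∀ u : V, ∀ x ∈ V₁, τ u x ∈ V₁ := by
    intro u x hx
    have hQx : projA V₂ V₁ hcompl.symm x = 0 := projA_right V₂ V₁ hcompl.symm x hx
    rw [hτ]
    simp only [tauFun, LinearMap.mk₂_apply, hQx, map_zero, LinearMap.zero_apply,
      sub_zero, zero_sub, add_zero, neg_zero]
    exact Submodule.smul_mem _ _ (sub_mem (sub_mem (projA_mem _ _ _ _)
      (projA_mem _ _ _ _)) (projA_mem _ _ _ _))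
  -- condition 3 : τ preserves V₂
  have cond3 : ∀ u : V, ∀ x ∈ V₂, τ u x ∈ V₂ := by
    intro u x hx
    have hPx : projA V₁ V₂ hcompl x = 0 := projA_right V₁ V₂ hcompl x hx
    rw [hτ]
    simp only [tauFun, LinearMap.mk₂_apply, hPx, map_zero, LinearMap.zero_apply,
      sub_zero, zero_sub, add_zero, neg_zero, zero_add]
    exact Submodule.smul_mem _ _ (sub_mem (sub_mem (projA_mem _ _ _ _)
      (projA_mem _ _ _ _)) (projA_mem _ _ _ _))
  -- condition 4 : T̃ alternating
  have cond4 : ∀ v : V, Tt v v = 0 := by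
    intro v
    simp [hTt, LinearMap.sub_apply, LinearMap.add_apply, LinearMap.flip_apply, hT]
  -- condition 6 : decomposition
  have cond6 : ∀ u v : V, T u v = (τ u v - τ v u) + Tt u v := by
    intro u v
    simp only [hTt, LinearMap.sub_apply, LinearMap.add_apply, LinearMap.flip_apply]
    abel
  -- condition 5 : symmetry of T̃ on each block
  have cond5 : ∀ u v w : V, ((v ∈ V₁ ∧ w ∈ V₁) ∨ (v ∈ V₂ ∧ w ∈ V₂)) →
      ⟪Tt u v, w⟫ = ⟪Tt u w, v⟫ := by
    intro u v w hvw
    simp only [hTt, LinearMap.sub_apply, LinearMap.add_apply, LinearMap.flip_apply,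
      inner_sub_left, inner_add_left]
    rcases hvw with ⟨hv, hw⟩ | ⟨hv, hw⟩
    · have hPv : P v = v := projA_left V₁ V₂ hcompl v hv
      have hPw : P w = w := projA_left V₁ V₂ hcompl w hw
      have hQv : Q v = 0 := projA_right V₂ V₁ hcompl.symm v hv
      have hQw : Q w = 0 := projA_right V₂ V₁ hcompl.symm w hw
      have k1 := key u v w
      have k2 := key v u w
      have k3 := key u w v
      have k4 := key w u v
      rw [hPv, hPw, hQv, hQw] at k1 k2 k3 k4
      simp only [map_zero, inner_zero_left, inner_zero_right, LinearMap.zero_apply] at k1 k2 k3 k4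
      have f1 := hTi v (P u) w
      have f2 := hTi w (P u) v
      have f3 := hTi w v (P u)
      linarith
    · have hQv : Q v = v := projA_left V₂ V₁ hcompl.symm v hv
      have hQw : Q w = w := projA_left V₂ V₁ hcompl.symm w hw
      have hPv : P v = 0 := projA_right V₁ V₂ hcompl v hv
      have hPw : P w = 0 := projA_right V₁ V₂ hcompl w hw
      have k1 := key u v w
      have k2 := key v u w
      have k3 := key u w v
      have k4 := key w u v
      rw [hPv, hPw, hQv, hQw] at k1 k2 k3 k4
      simp only [map_zero, inner_zero_left, inner_zero_right, LinearMap.zero_apply] at k1 k2 k3 k4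
      have f1 := hTi v (Q u) w
      have f2 := hTi w (Q u) v
      have f3 := hTi w v (Q u)
      linarith
  refine ⟨(τ, Tt), ⟨cond1, cond2, cond3, cond4, cond5, cond6⟩, ?_⟩
  rintro ⟨q1, q2⟩ ⟨g1, g2, g3, g4, g5, g6⟩
  simp only at g1 g2 g3 g4 g5 g6 ⊢
  -- σ := q1 - τ is zero
  have hσ : q1 - τ = 0 := by
    apply sigma_zero V₁ V₂ horth hcompl
    · intro u v w
      simp only [LinearMap.sub_apply, inner_sub_left, inner_sub_right]
      have a1 := g1 u v w
      have a2 := cond1 u v w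
      linarith
    · intro u x hx
      exact Submodule.sub_mem _ (g2 u x hx) (cond2 u x hx)
    · intro u x hx
      exact Submodule.sub_mem _ (g3 u x hx) (cond3 u x hx)
    · intro u v w hvw
      have kuv : q1 u v - q1 v u + q2 u v = τ u v - τ v u + Tt u v :=
        (g6 u v).symm.trans (cond6 u v)
      have kuw : q1 u w - q1 w u + q2 u w = τ u w - τ w u + Tt u w :=
        (g6 u w).symm.trans (cond6 u w)
      have kvw := congrArg (fun z => ⟪z, w⟫) kuv
      have kwv := congrArg (fun z => ⟪z, v⟫) kuw
      simp only [inner_add_left, inner_sub_left] at kvw kwv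
      have s1 := cond5 u v w hvw
      have s2 := g5 u v w hvw
      simp only [LinearMap.sub_apply, inner_sub_left]
      linarith
  have hq1 : q1 = τ := sub_eq_zero.mp hσ
  have hq2 : q2 = Tt := by
    apply LinearMap.ext; intro u; apply LinearMap.ext; intro v
    have a := (g6 u v).symm.trans (cond6 u v)
    rw [hq1] at a
    exact add_left_cancel a
  rw [hq1, hq2]
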